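/- Let (X, d) be a metric space, μ a Borel measure on X that is finite on bounded sets, q ∈ X a fixed point, and C > 0. Suppose (i) for every r > 0, every L ≥ 0 and every L-Lipschitz function f : X → ℝ vanishing outside the open ball B(q, r), one has (∫_X |f|⁴ dμ)^{1/4} ≤ C · L · μ(B(q, r))^{1/2}; and (ii) there exist c₀ > 0 and ρ₀ > 0 such that μ(B(q, ρ)) ≥ c₀ ρ⁴ for all 0 < ρ ≤ ρ₀. Then μ(B(q, s)) ≥ C₁ s⁴ for all s > 0, where C₁ = min(1, 1/(256 C⁴)); in particular C₁ depends only on C. -/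

import Mathlib

open Metric MeasureTheory Filter

/-- Lower volume growth lemma: on a metric measure space, a Sobolev-type
inequality (for Lipschitz functions supported in balls around `q`) together
with the small-ball density condition forces Euclidean lower volume growth
`μ(B(q,s)) ≥ C₁ s⁴` with `C₁ = min(1, 1/(256 C⁴))` depending only on `C`. -/
theorem lower_volume_growth {X : Type*} [MetricSpace X] [MeasurableSpace X]
    [BorelSpace X] (μ : Measure X)
    (hfinite : ∀ s : Set X, Bornology.IsBounded s → μ s < ⊤)
    (q : X) (C : ℝ) (hC : 0 < C)
    (hSob : ∀ r : ℝ, 0 < r → ∀ L : ℝ, 0 ≤ L → ∀ f : X → ℝ,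
      LipschitzWith (Real.toNNReal L) f → (∀ x ∉ ball q r, f x = 0) →
      (∫⁻ x, ENNReal.ofReal (|f x| ^ 4) ∂μ) ^ ((1 : ℝ) / 4)
        ≤ ENNReal.ofReal (C * L) * (μ (ball q r)) ^ ((1 : ℝ) / 2))
    (c₀ ρ₀ : ℝ) (hc₀ : 0 < c₀) (hρ₀ : 0 < ρ₀)
    (hsmall : ∀ ρ : ℝ, 0 < ρ → ρ ≤ ρ₀ → ENNReal.ofReal (c₀ * ρ ^ 4) ≤ μ (ball q ρ)) :
    ∀ s : ℝ, 0 < s →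
      ENNReal.ofReal (min 1 (1 / (256 * C ^ 4)) * s ^ 4) ≤ μ (ball q s) := by
  set v : ℝ → ℝ := fun r => (μ (ball q r)).toReal with hv
  have hfin : ∀ r : ℝ, μ (ball q r) ≠ ⊤ := fun r =>
    (hfinite _ isBounded_ball).ne
  have hv0 : ∀ r : ℝ, 0 ≤ v r := fun r => ENNReal.toReal_nonneg
  have hC4 : (0:ℝ) < C ^ 4 := by positivity
  set K : ℝ := 1 / (256 * C ^ 4) with hKdef
  have hK : 0 < K := by positivity
  -- Key step: Sobolev inequality with tent function gives recursion
  have key : ∀ r : ℝ, 0 < r → (r/2)^4 * v (r/2) ≤ C^4 * (v r)^2 := by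
    intro r hr
    set f : X → ℝ := fun x => max (r - dist x q) 0 with hf
    have hlip : LipschitzWith (Real.toNNReal 1) f := by
      rw [Real.toNNReal_one]
      have h1 : LipschitzWith 1 (fun x : X => r - dist x q) := by
        refine LipschitzWith.of_dist_le_mul fun x y => ?_
        simp only [NNReal.coe_one, one_mul, Real.dist_eq]
        have h := abs_dist_sub_le x y q
        have e : r - dist x q - (r - dist y q) = -(dist x q - dist y q) := by ring
        rw [e, abs_neg]
        exact h
      exact h1.max_const 0
    have hvanish : ∀ x ∉ ball q r, f x = 0 := by
      intro x hx
      rw [mem_ball, not_lt] at hx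
      exact max_eq_right (sub_nonpos.mpr hx)
    have hs := hSob r hr 1 zero_le_one f hlip hvanish
    rw [mul_one] at hs
    -- lower bound on the integral
    have hlow : ENNReal.ofReal ((r/2)^4) * μ (ball q (r/2))
        ≤ ∫⁻ x, ENNReal.ofReal (|f x| ^ 4) ∂μ := by
      have h1 : ENNReal.ofReal ((r/2)^4) * μ (ball q (r/2))
          = ∫⁻ _ in ball q (r/2), ENNReal.ofReal ((r/2)^4) ∂μ := by
        rw [setLIntegral_const]
      rw [h1]
      refine le_trans (setLIntegral_mono' measurableSet_ball ?_)
        (setLIntegral_le_lintegral _ _)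
      intro x hx
      rw [mem_ball] at hx
      apply ENNReal.ofReal_le_ofReal
      have hfx : r / 2 ≤ f x := by
        have : r / 2 ≤ r - dist x q := by linarith
        exact le_trans this (le_max_left _ _)
      have hfx0 : 0 ≤ f x := le_max_right _ _
      rw [abs_of_nonneg hfx0]
      exact pow_le_pow_left₀ (by positivity) hfx 4
    have h2 : (ENNReal.ofReal ((r/2)^4) * μ (ball q (r/2))) ^ ((1:ℝ)/4)
        ≤ ENNReal.ofReal C * μ (ball q r) ^ ((1:ℝ)/2) :=
      le_trans (ENNReal.rpow_le_rpow hlow (by norm_num)) hs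
    have h3 : ENNReal.ofReal ((r/2)^4) * μ (ball q (r/2))
        ≤ ENNReal.ofReal (C^4) * μ (ball q r) ^ 2 := by
      have h4 := pow_le_pow_left₀ zero_le h2 4
      have e1 : ((ENNReal.ofReal ((r/2)^4) * μ (ball q (r/2))) ^ ((1:ℝ)/4)) ^ (4:ℕ)
          = ENNReal.ofReal ((r/2)^4) * μ (ball q (r/2)) := by
        rw [← ENNReal.rpow_natCast (_ ^ ((1:ℝ)/4)) 4, ← ENNReal.rpow_mul]
        norm_num
      have e2 : (ENNReal.ofReal C * μ (ball q r) ^ ((1:ℝ)/2)) ^ (4:ℕ)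
          = ENNReal.ofReal (C^4) * μ (ball q r) ^ 2 := by
        rw [mul_pow, ← ENNReal.ofReal_pow hC.le,
          ← ENNReal.rpow_natCast (μ (ball q r) ^ ((1:ℝ)/2)) 4, ← ENNReal.rpow_mul]
        norm_num
      rwa [e1, e2] at h4
    have hrhs : ENNReal.ofReal (C^4) * μ (ball q r) ^ 2 ≠ ⊤ :=
      ENNReal.mul_ne_top ENNReal.ofReal_ne_top (ENNReal.pow_ne_top (hfin r))
    have h5 := ENNReal.toReal_mono hrhs h3
    rwa [ENNReal.toReal_mul, ENNReal.toReal_mul, ENNReal.toReal_ofReal (by positivity),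
      ENNReal.toReal_ofReal (by positivity), ENNReal.toReal_pow] at h5
  -- the iterated constants
  set t : ℝ := min c₀ K with htdef
  have ht : 0 < t := lt_min hc₀ hK
  set a : ℕ → ℝ := fun n => K * Real.exp ((1/2:ℝ)^n * Real.log (t / K)) with ha
  have ha0 : a 0 = t := by
    simp [ha, Real.exp_log (by positivity : (0:ℝ) < t / K)]
    field_simp
  have hapos : ∀ n, 0 < a n := fun n => by positivity
  have hastep : ∀ n, Real.sqrt (a n * K) = a (n+1) := by
    intro n
    set y : ℝ := (1/2:ℝ)^n * Real.log (t / K) with hy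
    have hy2 : (1/2:ℝ)^(n+1) * Real.log (t / K) = y / 2 := by
      rw [hy]; ring
    have : a n * K = (a (n+1))^2 := by
      simp only [ha, hy2, ← hy]
      rw [mul_pow, sq (Real.exp (y/2)), ← Real.exp_add]
      ring_nf
    rw [this, Real.sqrt_sq (hapos (n+1)).le]
  -- the induction
  have ind : ∀ n : ℕ, ∀ s : ℝ, 0 < s → s ≤ 2^n * ρ₀ → a n * s^4 ≤ v s := by
    intro n
    induction n with
    | zero =>
      intro s hs hsle
      rw [pow_zero, one_mul] at hsle
      have h := hsmall s hs hsle
      have : c₀ * s^4 ≤ v s := by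
        rw [hv]
        exact (ENNReal.ofReal_le_iff_le_toReal (hfin s)).mp h
      calc a 0 * s^4 ≤ c₀ * s^4 := by
            rw [ha0]; exact mul_le_mul_of_nonneg_right (min_le_left _ _) (by positivity)
        _ ≤ v s := this
    | succ n ih =>
      intro s hs hsle
      have hs2 : 0 < s / 2 := by linarith
      have hs2le : s / 2 ≤ 2^n * ρ₀ := by
        rw [pow_succ] at hsle
        linarith
      have h1 := ih (s/2) hs2 hs2le
      have h2 := key s hs
      -- v s ^ 2 ≥ a n * K * s^8
      have h3 : a n * K * s^8 ≤ (v s)^2 := by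
        have : (s/2)^4 * (a n * (s/2)^4) ≤ (s/2)^4 * v (s/2) :=
          mul_le_mul_of_nonneg_left h1 (by positivity)
        have h4 : (s/2)^4 * (a n * (s/2)^4) ≤ C^4 * (v s)^2 := le_trans this h2
        have heq : (s/2)^4 * (a n * (s/2)^4) = a n * (s^8 / 256) := by ring
        rw [heq] at h4
        have heq2 : a n * K * s^8 = (a n * (s^8 / 256)) / C^4 := by
          rw [hKdef]; field_simp
        rw [heq2, div_le_iff₀ hC4]
        nlinarith [h4]
      have h5 : Real.sqrt (a n * K * s^8) ≤ v s := by
        calc Real.sqrt (a n * K * s^8) ≤ Real.sqrt ((v s)^2) := Real.sqrt_le_sqrt h3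
          _ = v s := Real.sqrt_sq (hv0 s)
      have h6 : Real.sqrt (a n * K * s^8) = a (n+1) * s^4 := by
        rw [show a n * K * s^8 = (a n * K) * (s^4)^2 by ring,
          Real.sqrt_mul (by positivity), Real.sqrt_sq (by positivity), hastep n]
      rw [h6] at h5
      exact h5
  -- pass to the limit
  intro s hs
  obtain ⟨N, hN⟩ : ∃ N : ℕ, s ≤ 2^N * ρ₀ := by
    obtain ⟨N, hN⟩ := pow_unbounded_of_one_lt (s / ρ₀) (one_lt_two (α := ℝ))
    exact ⟨N, by rw [← div_le_iff₀ hρ₀]; exact hN.le⟩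
  have hev : ∀ n ≥ N, a n * s^4 ≤ v s := by
    intro n hn
    refine ind n s hs (le_trans hN ?_)
    exact mul_le_mul_of_nonneg_right (pow_le_pow_right₀ one_le_two hn) hρ₀.le
  have hlim : Tendsto (fun n => a n * s^4) atTop (nhds (K * s^4)) := by
    have h1 : Tendsto (fun n : ℕ => (1/2:ℝ)^n) atTop (nhds 0) :=
      tendsto_pow_atTop_nhds_zero_of_lt_one (by norm_num) (by norm_num)
    have h2 : Tendsto (fun n : ℕ => (1/2:ℝ)^n * Real.log (t / K)) atTop (nhds 0) := by
      simpa using h1.mul_const (Real.log (t / K))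
    have h3 : Tendsto (fun n : ℕ => Real.exp ((1/2:ℝ)^n * Real.log (t / K)))
        atTop (nhds 1) := by
      simpa [Function.comp_def] using (Real.continuous_exp.tendsto 0).comp h2
    have h4 := h3.const_mul K
    rw [mul_one] at h4
    exact h4.mul_const _
  have hfinal : K * s^4 ≤ v s :=
    le_of_tendsto hlim (eventually_atTop.mpr ⟨N, hev⟩)
  refine ENNReal.ofReal_le_of_le_toReal ?_
  calc min 1 (1 / (256 * C^4)) * s^4 ≤ K * s^4 :=
        mul_le_mul_of_nonneg_right (min_le_right _ _) (by positivity)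
    _ ≤ v s := hfinal
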